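/- arXiv:2509.16537 — 2 statements merged into one kernel-verified Lean document; each statement's English description precedes it below -/
import Mathlib

section
/- Suppose each G_j : 𝒳 → ℝ^d is continuous and each h_j : 𝒳 → ℝ is Lipschitz continuous with modulus L_j > 0. Let θ^c ∈ Θ, r^c ∈ [0,1], and let (θ_N) ⊆ Θ and (r_N) ⊆ [0,1] be sequences with θ_N → θ^c and r_N → r^c. Then 𝔻(𝔛(θ_N, r_N), 𝔛(θ^c, r^c)) → 0 as N → ∞; equivalently, for every sequence x_N ∈ 𝔛(θ_N, r_N), every accumulation point of (x_N) belongs to 𝔛(θ^c, r^c). -/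
open Set Filter MeasureTheory
open scoped ENNReal

noncomputable section

/-- The probability simplex Θ in ℝⁿ. -/
def simplex (n : ℕ) : Set (Fin n → ℝ) := {θ | ∑ j, θ j = 1 ∧ ∀ j, 0 ≤ θ j}

/-- Ambiguity set `𝔹∞(c, r) ∩ Θ`.  (The norm on `Fin n → ℝ` is the sup norm.) -/
def amb {n : ℕ} (c : Fin n → ℝ) (r : ℝ) : Set (Fin n → ℝ) :=
  {θ | ‖θ - c‖ ≤ r} ∩ simplex n

/-- Regularized lower-level objective `∑_j θ_j h_j(x) − λ‖θ‖²` (Euclidean norm squared). -/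
def obj {n d : ℕ} (h : Fin n → (Fin d → ℝ) → ℝ) (lam : ℝ) (x : Fin d → ℝ)
    (θ : Fin n → ℝ) : ℝ :=
  (∑ j, θ j * h j x) - lam * ∑ j, (θ j) ^ 2

/-- Optimal value `ν^λ(x, c, r)` of the regularized lower-level problem. -/
def nuval {n d : ℕ} (h : Fin n → (Fin d → ℝ) → ℝ) (lam : ℝ) (x : Fin d → ℝ)
    (c : Fin n → ℝ) (r : ℝ) : ℝ :=
  sSup (obj h lam x '' amb c r)

/-- Maximizer set `ϑ^λ(x, c, r)` of the regularized lower-level problem. -/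
def argmaxSet {n d : ℕ} (h : Fin n → (Fin d → ℝ) → ℝ) (lam : ℝ) (x : Fin d → ℝ)
    (c : Fin n → ℝ) (r : ℝ) : Set (Fin n → ℝ) :=
  {θ ∈ amb c r | obj h lam x θ = nuval h lam x c r}

/-- Normal cone of `X` at `x` (standard inner product on ℝ^d). -/
def normalCone {d : ℕ} (X : Set (Fin d → ℝ)) (x : Fin d → ℝ) : Set (Fin d → ℝ) :=
  {v | ∀ y ∈ X, ∑ i, v i * (y i - x i) ≤ 0}

/-- x-solution set `𝔛^λ(c, r)` of the (regularized) Bayesian DRVI. -/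
def solSet {n d : ℕ} (G : Fin n → (Fin d → ℝ) → Fin d → ℝ)
    (h : Fin n → (Fin d → ℝ) → ℝ) (lam : ℝ) (X : Set (Fin d → ℝ))
    (c : Fin n → ℝ) (r : ℝ) : Set (Fin d → ℝ) :=
  {x ∈ X | ∃ θ ∈ argmaxSet h lam x c r,
      ∀ y ∈ X, 0 ≤ ∑ i, (∑ j, θ j * G j x i) * (y i - x i)}

/-- One-sided deviation `𝔻(S, T)` (the metric of the Pi type is the sup metric). -/
def dev {α : Type*} [PseudoMetricSpace α] (S T : Set α) : ℝ :=
  sSup ((fun s => Metric.infDist s T) '' S)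

/-- One-sided deviation with values in `ℝ≥0∞`. -/
def devE {α : Type*} [PseudoMetricSpace α] (S T : Set α) : ℝ≥0∞ :=
  ⨆ s ∈ S, ENNReal.ofReal (Metric.infDist s T)

/-- Lower-level growth function `ψ_x^λ` at parameters `(c, r)`
(values in `[0,∞]`; the infimum over the empty set is `⊤`). -/
def psiLow {n d : ℕ} (h : Fin n → (Fin d → ℝ) → ℝ) (lam : ℝ) (x : Fin d → ℝ)
    (c : Fin n → ℝ) (r : ℝ) (τ : ℝ) : ℝ≥0∞ :=
  ⨅ θ ∈ {θ ∈ amb c r | τ ≤ Metric.infDist θ (argmaxSet h lam x c r)},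
    ENNReal.ofReal (nuval h lam x c r - obj h lam x θ)

/-- Generalized inverse `(ψ_x^λ)⁻¹(t) = sup{τ ≥ 0 : ψ_x^λ(τ) ≤ t}`. -/
def psiLowInv {n d : ℕ} (h : Fin n → (Fin d → ℝ) → ℝ) (lam : ℝ) (x : Fin d → ℝ)
    (c : Fin n → ℝ) (r : ℝ) (t : ℝ) : ℝ≥0∞ :=
  ⨆ τ ∈ {τ : ℝ | 0 ≤ τ ∧ psiLow h lam x c r τ ≤ ENNReal.ofReal t}, ENNReal.ofReal τ

/-- `Ψ_x^λ(η) = η + (ψ_x^λ)⁻¹(2η)`. -/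
def PsiLow {n d : ℕ} (h : Fin n → (Fin d → ℝ) → ℝ) (lam : ℝ) (x : Fin d → ℝ)
    (c : Fin n → ℝ) (r : ℝ) (η : ℝ) : ℝ≥0∞ :=
  ENNReal.ofReal η + psiLowInv h lam x c r (2 * η)

/-- Residual `d(0, ∑_j θ_j G_j(x) + N_X(x))` (ℓ∞ distance). -/
def resid {n d : ℕ} (G : Fin n → (Fin d → ℝ) → Fin d → ℝ) (X : Set (Fin d → ℝ))
    (x : Fin d → ℝ) (θ : Fin n → ℝ) : ℝ :=
  Metric.infDist (0 : Fin d → ℝ)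
    ((fun w => (fun i => ∑ j, θ j * G j x i) + w) '' normalCone X x)

/-- Solution-set growth function `ψ^λ_{c,r}` (values in `[0,∞]`). -/
def psiSol {n d : ℕ} (G : Fin n → (Fin d → ℝ) → Fin d → ℝ)
    (h : Fin n → (Fin d → ℝ) → ℝ) (lam : ℝ) (X : Set (Fin d → ℝ))
    (c : Fin n → ℝ) (r : ℝ) (τ : ℝ) : ℝ≥0∞ :=
  ⨅ x ∈ {x ∈ X | τ ≤ Metric.infDist x (solSet G h lam X c r)},
    ⨅ θ ∈ argmaxSet h lam x c r, ENNReal.ofReal (resid G X x θ)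

/-- Generalized inverse `(ψ^λ_{c,r})⁻¹(t) = sup{τ ≥ 0 : ψ^λ_{c,r}(τ) ≤ t}`. -/
def psiSolInv {n d : ℕ} (G : Fin n → (Fin d → ℝ) → Fin d → ℝ)
    (h : Fin n → (Fin d → ℝ) → ℝ) (lam : ℝ) (X : Set (Fin d → ℝ))
    (c : Fin n → ℝ) (r : ℝ) (t : ℝ) : ℝ≥0∞ :=
  ⨆ τ ∈ {τ : ℝ | 0 ≤ τ ∧ psiSol G h lam X c r τ ≤ ENNReal.ofReal t}, ENNReal.ofReal τ

lemma simplex_le_one {n : ℕ} {θ : Fin n → ℝ} (hθ : θ ∈ simplex n) (j : Fin n) : θ j ≤ 1 := by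
  have := Finset.single_le_sum (f := θ) (fun i _ => hθ.2 i) (Finset.mem_univ j)
  simpa [hθ.1] using this

lemma simplex_isCompact (n : ℕ) : IsCompact (simplex n) := by
  apply Metric.isCompact_of_isClosed_isBounded
  · have h1 : IsClosed {θ : Fin n → ℝ | ∑ j, θ j = 1} :=
      isClosed_eq (by continuity) continuous_const
    have h2 : IsClosed (⋂ j, {θ : Fin n → ℝ | 0 ≤ θ j}) :=
      isClosed_iInter fun j => isClosed_le continuous_const (continuous_apply j)
    have : simplex n = {θ : Fin n → ℝ | ∑ j, θ j = 1} ∩ ⋂ j, {θ : Fin n → ℝ | 0 ≤ θ j} := by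
      ext θ; simp [simplex, Set.mem_iInter]
    rw [this]; exact h1.inter h2
  · apply Bornology.IsBounded.subset (Metric.isBounded_closedBall (x := (0 : Fin n → ℝ)) (r := 1))
    intro θ hθ
    simp only [Metric.mem_closedBall, dist_zero_right]
    rw [pi_norm_le_iff_of_nonneg zero_le_one]
    intro j
    rw [Real.norm_eq_abs, abs_of_nonneg (hθ.2 j)]
    exact simplex_le_one hθ j

lemma comb_mem_simplex {n : ℕ} {c θ' : Fin n → ℝ} (hc : c ∈ simplex n)
    (hθ' : θ' ∈ simplex n) {s : ℝ} (h0 : 0 ≤ s) (h1 : s ≤ 1) :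
    c + s • (θ' - c) ∈ simplex n := by
  constructor
  · simp only [Pi.add_apply, Pi.smul_apply, Pi.sub_apply, smul_eq_mul]
    rw [Finset.sum_add_distrib]
    have : ∑ j, s * (θ' j - c j) = s * (∑ j, θ' j - ∑ j, c j) := by
      rw [← Finset.mul_sum, Finset.sum_sub_distrib]
    rw [this, hc.1, hθ'.1]
    ring
  · intro j
    simp only [Pi.add_apply, Pi.smul_apply, Pi.sub_apply, smul_eq_mul]
    have : c j + s * (θ' j - c j) = (1 - s) * c j + s * θ' j := by ring
    rw [this]
    have hc2 := hc.2 j; have ht2 := hθ'.2 j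
    have h1' : 0 ≤ (1 - s) * c j := mul_nonneg (by linarith) hc2
    have h2' : 0 ≤ s * θ' j := mul_nonneg h0 ht2
    linarith

lemma approx_seq {n : ℕ} (θc : Fin n → ℝ) (rc : ℝ) (hrc : 0 ≤ rc)
    (c : ℕ → Fin n → ℝ) (ρ : ℕ → ℝ) (hc : ∀ k, c k ∈ simplex n) (hρ : ∀ k, 0 ≤ ρ k)
    (hcc : Tendsto c atTop (nhds θc)) (hρc : Tendsto ρ atTop (nhds rc))
    (θ' : Fin n → ℝ) (hθ' : θ' ∈ amb θc rc) :
    ∃ T : ℕ → Fin n → ℝ, (∀ k, T k ∈ amb (c k) (ρ k)) ∧ Tendsto T atTop (nhds θ') := by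
  set δ : ℕ → ℝ := fun k => ‖c k - θc‖ with hδ
  have hδ0 : ∀ k, 0 ≤ δ k := fun k => norm_nonneg _
  have hδc : Tendsto δ atTop (nhds 0) := by
    have h' : Tendsto (fun k => c k - θc) atTop (nhds (θc - θc)) :=
      hcc.sub tendsto_const_nhds
    rw [sub_self] at h'
    simpa using h'.norm
  set s : ℕ → ℝ := fun k => min 1 (ρ k / (rc + δ k)) with hs
  have hs0 : ∀ k, 0 ≤ s k := fun k =>
    le_min zero_le_one (div_nonneg (hρ k) (by positivity))
  have hs1 : ∀ k, s k ≤ 1 := fun k => min_le_left _ _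
  refine ⟨fun k => c k + s k • (θ' - c k), fun k => ?_, ?_⟩
  · refine ⟨?_, comb_mem_simplex (hc k) hθ'.2 (hs0 k) (hs1 k)⟩
    simp only [Set.mem_setOf_eq, add_sub_cancel_left]
    rw [norm_smul, Real.norm_eq_abs, abs_of_nonneg (hs0 k)]
    have hb : ‖θ' - c k‖ ≤ rc + δ k := by
      calc ‖θ' - c k‖ = ‖(θ' - θc) + (θc - c k)‖ := by ring_nf
        _ ≤ ‖θ' - θc‖ + ‖θc - c k‖ := norm_add_le _ _
        _ ≤ rc + δ k := by
            have h1 : ‖θ' - θc‖ ≤ rc := hθ'.1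
            have h2 : ‖θc - c k‖ = δ k := by rw [hδ, norm_sub_rev]
            linarith
    rcases eq_or_lt_of_le (by positivity : (0:ℝ) ≤ rc + δ k) with hz | hz
    · have : ‖θ' - c k‖ = 0 := le_antisymm (by rw [← hz] at hb; exact hb) (norm_nonneg _)
      rw [this, mul_zero]; exact hρ k
    · calc s k * ‖θ' - c k‖ ≤ (ρ k / (rc + δ k)) * (rc + δ k) := by
            apply mul_le_mul (min_le_right _ _) hb (norm_nonneg _)
              (div_nonneg (hρ k) hz.le)
        _ = ρ k := div_mul_cancel₀ _ hz.ne'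
  · -- Tendsto (fun k => c k + s k • (θ' - c k)) atTop (nhds θ')
    rw [tendsto_iff_norm_sub_tendsto_zero]
    have key : ∀ k, ‖(c k + s k • (θ' - c k)) - θ'‖ ≤ (1 - s k) * (δ k + rc) := by
      intro k
      have : (c k + s k • (θ' - c k)) - θ' = (1 - s k) • (c k - θ') := by
        ext i; simp only [Pi.add_apply, Pi.smul_apply, Pi.sub_apply, smul_eq_mul]; ring
      rw [this, norm_smul, Real.norm_eq_abs, abs_of_nonneg (by linarith [hs1 k])]
      apply mul_le_mul_of_nonneg_left _ (by linarith [hs1 k])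
      calc ‖c k - θ'‖ = ‖(c k - θc) + (θc - θ')‖ := by ring_nf
        _ ≤ ‖c k - θc‖ + ‖θc - θ'‖ := norm_add_le _ _
        _ ≤ δ k + rc := by
            have : ‖θc - θ'‖ ≤ rc := by rw [norm_sub_rev]; exact hθ'.1
            linarith
    have hbnd : Tendsto (fun k => (1 - s k) * (δ k + rc)) atTop (nhds 0) := by
      rcases eq_or_lt_of_le hrc with h0 | h0
      · -- rc = 0 : bound ≤ δ k
        apply squeeze_zero
          (fun k => mul_nonneg (by linarith [hs1 k]) (add_nonneg (hδ0 k) hrc))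
          (fun k => ?_) (by simpa using hδc)
        calc (1 - s k) * (δ k + rc) ≤ 1 * (δ k + rc) := by
              apply mul_le_mul_of_nonneg_right (by linarith [hs0 k]) (by positivity)
          _ = δ k := by rw [← h0]; ring
      · -- rc > 0 : s k → 1
        have hst : Tendsto s atTop (nhds 1) := by
          have hq : Tendsto (fun k => ρ k / (rc + δ k)) atTop (nhds (rc / (rc + 0))) :=
            hρc.div (tendsto_const_nhds.add hδc) (by positivity)
          have : Tendsto s atTop (nhds (min 1 (rc / (rc + 0)))) :=
            (tendsto_const_nhds.min hq)
          simpa [div_self h0.ne'] using this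
        have : Tendsto (fun k => (1 - s k) * (δ k + rc)) atTop (nhds ((1 - 1) * (0 + rc))) :=
          (tendsto_const_nhds.sub hst).mul (hδc.add tendsto_const_nhds)
        simpa using this
    exact squeeze_zero (fun k => norm_nonneg _) key hbnd

lemma obj_le_bound {n d : ℕ} (h : Fin n → (Fin d → ℝ) → ℝ) (x : Fin d → ℝ)
    {θ : Fin n → ℝ} (hθ : θ ∈ simplex n) : obj h 0 x θ ≤ ∑ j, |h j x| := by
  simp only [obj, zero_mul, sub_zero]
  apply Finset.sum_le_sum
  intro j _
  calc θ j * h j x ≤ θ j * |h j x| :=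
        mul_le_mul_of_nonneg_left (le_abs_self _) (hθ.2 j)
    _ ≤ 1 * |h j x| := mul_le_mul_of_nonneg_right (simplex_le_one hθ j) (abs_nonneg _)
    _ = |h j x| := one_mul _

lemma obj_tendsto {n d : ℕ} (h : Fin n → (Fin d → ℝ) → ℝ) (X : Set (Fin d → ℝ))
    (L : Fin n → ℝ) (hhLip : ∀ j, ∀ x ∈ X, ∀ y ∈ X, |h j x - h j y| ≤ L j * ‖x - y‖)
    (y : ℕ → Fin d → ℝ) (hy : ∀ k, y k ∈ X) (xb : Fin d → ℝ) (hxb : xb ∈ X)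
    (hyc : Tendsto y atTop (nhds xb))
    (T : ℕ → Fin n → ℝ) (θb : Fin n → ℝ) (hT : Tendsto T atTop (nhds θb)) :
    Tendsto (fun k => obj h 0 (y k) (T k)) atTop (nhds (obj h 0 xb θb)) := by
  simp only [obj, zero_mul, sub_zero]
  apply tendsto_finset_sum
  intro j _
  have h1 : Tendsto (fun k => T k j) atTop (nhds (θb j)) :=
    ((continuous_apply j).tendsto _).comp hT
  have h2 : Tendsto (fun k => h j (y k)) atTop (nhds (h j xb)) := by
    rw [tendsto_iff_dist_tendsto_zero]
    have h3 : Tendsto (fun k => y k - xb) atTop (nhds (xb - xb)) :=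
      hyc.sub tendsto_const_nhds
    rw [sub_self] at h3
    have h4 := h3.norm
    simp only [norm_zero] at h4
    have hb : Tendsto (fun k => L j * ‖y k - xb‖) atTop (nhds 0) := by
      simpa using tendsto_const_nhds.mul h4
    exact squeeze_zero (fun k => dist_nonneg)
      (fun k => by rw [Real.dist_eq]; exact hhLip j (y k) (hy k) xb hxb) hb
  exact h1.mul h2

/-- Theorem 3.5 (deterministic core): convergence of the data-driven x-solution sets to
the true one as the ambiguity parameters converge. -/
theorem solSet_convergence {n d : ℕ} (hn : 1 ≤ n) (hd : 1 ≤ d)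
    (X : Set (Fin d → ℝ)) (hXne : X.Nonempty) (hXcomp : IsCompact X) (hXconv : Convex ℝ X)
    (G : Fin n → (Fin d → ℝ) → Fin d → ℝ) (h : Fin n → (Fin d → ℝ) → ℝ)
    (hG : ∀ j, ContinuousOn (G j) X)
    (L : Fin n → ℝ) (hL : ∀ j, 0 < L j)
    (hhLip : ∀ j, ∀ x ∈ X, ∀ y ∈ X, |h j x - h j y| ≤ L j * ‖x - y‖)
    (θc : Fin n → ℝ) (hθc : θc ∈ simplex n) (rc : ℝ) (hrc : rc ∈ Set.Icc (0 : ℝ) 1)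
    (θN : ℕ → Fin n → ℝ) (hθN : ∀ N, θN N ∈ simplex n)
    (rN : ℕ → ℝ) (hrN : ∀ N, rN N ∈ Set.Icc (0 : ℝ) 1)
    (hθconv : Tendsto θN atTop (nhds θc)) (hrconv : Tendsto rN atTop (nhds rc)) :
    ∀ ε : ℝ, 0 < ε → ∃ N0 : ℕ, ∀ N ≥ N0,
      ∀ x ∈ solSet G h 0 X (θN N) (rN N),
        Metric.infDist x (solSet G h 0 X θc rc) ≤ ε := by
  
  intro ε hε
  by_contra hcon
  push_neg at hcon
  choose f hf x hxmem hxdist using hcon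
  set S := solSet G h 0 X θc rc with hS
  have hxX : ∀ k, x k ∈ X := fun k => (hxmem k).1
  have hθex : ∀ k, ∃ θ ∈ argmaxSet h 0 (x k) (θN (f k)) (rN (f k)),
      ∀ y ∈ X, 0 ≤ ∑ i, (∑ j, θ j * G j (x k) i) * (y i - x k i) := fun k => (hxmem k).2
  choose θ hθarg hVI using hθex
  obtain ⟨xb, hxbX, ψ, hψ, hxt⟩ := hXcomp.tendsto_subseq hxX
  obtain ⟨θb, hθbS, φ, hφ, hθt⟩ :=
    (simplex_isCompact n).tendsto_subseq (x := fun k => θ (ψ k))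
      (fun k => (hθarg (ψ k)).1.2)
  set σ : ℕ → ℕ := fun k => ψ (φ k) with hσ
  have hσle : ∀ k, k ≤ σ k := fun k => le_trans (hφ.le_apply) (hψ.le_apply)
  have hidxle : ∀ k, k ≤ f (σ k) := fun k => le_trans (hσle k) (hf (σ k))
  have hidx : Tendsto (fun k => f (σ k)) atTop atTop :=
    tendsto_atTop_mono hidxle tendsto_id
  set c' : ℕ → Fin n → ℝ := fun k => θN (f (σ k)) with hc'
  set ρ' : ℕ → ℝ := fun k => rN (f (σ k)) with hρ'
  have hc't : Tendsto c' atTop (nhds θc) := hθconv.comp hidx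
  have hρ't : Tendsto ρ' atTop (nhds rc) := hrconv.comp hidx
  set μ : ℕ → Fin n → ℝ := fun k => θ (σ k) with hμ
  have hμt : Tendsto μ atTop (nhds θb) := hθt.congr (fun k => rfl)
  have hxσt : Tendsto (fun k => x (σ k)) atTop (nhds xb) :=
    hxt.comp hφ.tendsto_atTop |>.congr (fun k => rfl)
  -- θb ∈ amb θc rc
  have hμamb : ∀ k, μ k ∈ amb (c' k) (ρ' k) := fun k => (hθarg (σ k)).1
  have hθbamb : θb ∈ amb θc rc := by
    refine ⟨?_, hθbS⟩
    have hlim : Tendsto (fun k => ‖μ k - c' k‖) atTop (nhds ‖θb - θc‖) :=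
      (hμt.sub hc't).norm
    exact le_of_tendsto_of_tendsto' hlim hρ't (fun k => (hμamb k).1)
  -- key inequality
  have hkey : ∀ θ' ∈ amb θc rc, obj h 0 xb θ' ≤ obj h 0 xb θb := by
    intro θ' hθ'
    obtain ⟨T, hTmem, hTt⟩ := approx_seq θc rc hrc.1 c' ρ'
      (fun k => hθN _) (fun k => (hrN _).1) hc't hρ't θ' hθ'
    have step : ∀ k, obj h 0 (x (σ k)) (T k) ≤ obj h 0 (x (σ k)) (μ k) := by
      intro k
      have heq := (hθarg (σ k)).2
      have hub : ∀ v ∈ obj h 0 (x (σ k)) '' amb (c' k) (ρ' k), v ≤ ∑ j, |h j (x (σ k))| := by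
        rintro v ⟨θ'', hθ''mem, rfl⟩
        exact obj_le_bound h _ hθ''mem.2
      calc obj h 0 (x (σ k)) (T k)
          ≤ sSup (obj h 0 (x (σ k)) '' amb (c' k) (ρ' k)) :=
            le_csSup ⟨∑ j, |h j (x (σ k))|, hub⟩ (Set.mem_image_of_mem _ (hTmem k))
        _ = obj h 0 (x (σ k)) (μ k) := heq.symm
    have hlhs := obj_tendsto h X L hhLip (fun k => x (σ k)) (fun k => hxX _) xb hxbX hxσt
      T θ' hTt
    have hrhs := obj_tendsto h X L hhLip (fun k => x (σ k)) (fun k => hxX _) xb hxbX hxσt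
      μ θb hμt
    exact le_of_tendsto_of_tendsto' hlhs hrhs step
  -- xb ∈ S
  have hxbS : xb ∈ S := by
    refine ⟨hxbX, θb, ⟨hθbamb, ?_⟩, ?_⟩
    · -- obj = nuval
      apply le_antisymm
      · exact le_csSup ⟨obj h 0 xb θb, by rintro v ⟨θ', hθ', rfl⟩; exact hkey θ' hθ'⟩
          (Set.mem_image_of_mem _ hθbamb)
      · exact csSup_le ⟨obj h 0 xb θb, Set.mem_image_of_mem _ hθbamb⟩
          (by rintro v ⟨θ', hθ', rfl⟩; exact hkey θ' hθ')
    · intro y hy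
      have hGt : ∀ j, Tendsto (fun k => G j (x (σ k))) atTop (nhds (G j xb)) := by
        intro j
        apply ((hG j xb hxbX).tendsto).comp
        exact tendsto_nhdsWithin_iff.mpr ⟨hxσt, Eventually.of_forall (fun k => hxX _)⟩
      have hF : Tendsto (fun k => ∑ i, (∑ j, μ k j * G j (x (σ k)) i) * (y i - x (σ k) i))
          atTop (nhds (∑ i, (∑ j, θb j * G j xb i) * (y i - xb i))) := by
        apply tendsto_finset_sum
        intro i _
        apply Tendsto.mul
        · apply tendsto_finset_sum
          intro j _
          exact (((continuous_apply j).tendsto _).comp hμt).mul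
            (((continuous_apply i).tendsto _).comp (hGt j))
        · exact tendsto_const_nhds.sub (((continuous_apply i).tendsto _).comp hxσt)
      exact ge_of_tendsto' hF (fun k => hVI (σ k) y hy)
  -- contradiction
  have hcont : Tendsto (fun k => Metric.infDist (x (σ k)) S) atTop
      (nhds (Metric.infDist xb S)) :=
    ((Metric.continuous_infDist_pt S).tendsto xb).comp hxσt
  have hεle : ε ≤ Metric.infDist xb S :=
    ge_of_tendsto' hcont (fun k => (hxdist (σ k)).le)
  rw [Metric.infDist_zero_of_mem hxbS] at hεle
  linarith
end
end

section
/- Suppose each G_j : 𝒳 → ℝ^d and each h_j : 𝒳 → ℝ is Lipschitz continuous on 𝒳. Let θ^c ∈ Θ, r^c ∈ [0,1], and let (θ_N) ⊆ Θ, (r_N) ⊆ [0,1] with θ_N → θ^c and r_N → r^c. Then lim_{N→∞} lim_{λ↓0} 𝔻(𝔛^λ(θ_N, r_N), 𝔛(θ^c, r^c)) = 0; explicitly, for every ε > 0 there exists N₀ such that for every N ≥ N₀ there exists λ_N > 0 with 𝔻(𝔛^λ(θ_N, r_N), 𝔛(θ^c, r^c)) ≤ ε for all λ ∈ (0, λ_N].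 -/
open Set Filter MeasureTheory
open scoped ENNReal

noncomputable section

lemma norm_le_one_of_mem_simplex {n : ℕ} {θ : Fin n → ℝ} (hθ : θ ∈ simplex n) : ‖θ‖ ≤ 1 := by
  rw [pi_norm_le_iff_of_nonneg zero_le_one]
  intro j
  rw [Real.norm_eq_abs, abs_of_nonneg (hθ.2 j)]
  calc θ j ≤ ∑ i, θ i := Finset.single_le_sum (fun i _ => hθ.2 i) (Finset.mem_univ j)
    _ = 1 := hθ.1

lemma isClosed_simplex {n : ℕ} : IsClosed (simplex n) := by
  have : simplex n = {θ : Fin n → ℝ | ∑ j, θ j = 1} ∩ ⋂ j, {θ | 0 ≤ θ j} := by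
    ext θ; simp [simplex]
  rw [this]
  exact (isClosed_eq (by fun_prop) continuous_const).inter
    (isClosed_iInter fun j => isClosed_le continuous_const (continuous_apply j))

lemma isCompact_simplex {n : ℕ} : IsCompact (simplex n) := by
  refine (isCompact_closedBall (0 : Fin n → ℝ) 1).of_isClosed_subset isClosed_simplex ?_
  intro θ hθ
  simpa [Metric.mem_closedBall, dist_eq_norm] using norm_le_one_of_mem_simplex hθ

lemma continuous_obj {n d : ℕ} (h : Fin n → (Fin d → ℝ) → ℝ) (lam : ℝ) (x : Fin d → ℝ) :
    Continuous fun θ : Fin n → ℝ => obj h lam x θ := by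
  unfold obj; fun_prop

lemma isCompact_amb {n : ℕ} (c : Fin n → ℝ) (r : ℝ) : IsCompact (amb c r) := by
  refine isCompact_simplex.of_isClosed_subset ?_ inter_subset_right
  exact (isClosed_le (by fun_prop) continuous_const).inter isClosed_simplex

lemma bddAbove_obj {n d : ℕ} (h : Fin n → (Fin d → ℝ) → ℝ) (lam : ℝ) (x : Fin d → ℝ)
    (c : Fin n → ℝ) (r : ℝ) : BddAbove (obj h lam x '' amb c r) :=
  ((isCompact_amb c r).image (continuous_obj h lam x)).bddAbove

lemma le_nuval {n d : ℕ} (h : Fin n → (Fin d → ℝ) → ℝ) (lam : ℝ) (x : Fin d → ℝ)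
    (c : Fin n → ℝ) (r : ℝ) {θ : Fin n → ℝ} (hθ : θ ∈ amb c r) :
    obj h lam x θ ≤ nuval h lam x c r :=
  le_csSup (bddAbove_obj h lam x c r) (Set.mem_image_of_mem _ hθ)

/-- Theorem 3.8 (deterministic core): combined convergence of the regularized
data-driven x-solution sets as the sample size grows and the regularization vanishes. -/
theorem combined_convergence {n d : ℕ} (hn : 1 ≤ n) (hd : 1 ≤ d)
    (X : Set (Fin d → ℝ)) (hXne : X.Nonempty) (hXcomp : IsCompact X) (hXconv : Convex ℝ X)
    (G : Fin n → (Fin d → ℝ) → Fin d → ℝ) (h : Fin n → (Fin d → ℝ) → ℝ)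
    (hGLip : ∀ j, ∃ LG : ℝ, ∀ x ∈ X, ∀ y ∈ X, ‖G j x - G j y‖ ≤ LG * ‖x - y‖)
    (hhLip : ∀ j, ∃ Lh : ℝ, ∀ x ∈ X, ∀ y ∈ X, |h j x - h j y| ≤ Lh * ‖x - y‖)
    (θc : Fin n → ℝ) (hθc : θc ∈ simplex n) (rc : ℝ) (hrc : rc ∈ Set.Icc (0 : ℝ) 1)
    (θN : ℕ → Fin n → ℝ) (hθN : ∀ N, θN N ∈ simplex n)
    (rN : ℕ → ℝ) (hrN : ∀ N, rN N ∈ Set.Icc (0 : ℝ) 1)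
    (hθconv : Tendsto θN atTop (nhds θc)) (hrconv : Tendsto rN atTop (nhds rc)) :
    ∀ ε : ℝ, 0 < ε → ∃ N0 : ℕ, ∀ N ≥ N0, ∃ lamN : ℝ, 0 < lamN ∧
      ∀ lam : ℝ, 0 < lam → lam ≤ lamN →
        ∀ x ∈ solSet G h lam X (θN N) (rN N),
          Metric.infDist x (solSet G h 0 X θc rc) ≤ ε := by
  intro ε hε
  by_contra hcon
  push_neg at hcon
  choose N hNge hrest using hcon
  have hpos : ∀ k : ℕ, (0:ℝ) < 1/(k+1) := by intro k; positivity
  choose lam hlam0 hlamle x hxsol hxdist using fun k => hrest k (1/(k+1)) (hpos k)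
  have hxmem : ∀ k, x k ∈ X := fun k => (hxsol k).1
  choose θ hθarg hVI using fun k => (hxsol k).2
  obtain ⟨xb, hxbX, φ₁, hφ₁, hxφ₁⟩ := hXcomp.tendsto_subseq hxmem
  have hθsimp : ∀ k, θ (φ₁ k) ∈ simplex n := fun k => ((hθarg (φ₁ k)).1).2
  obtain ⟨θb, hθbsimp, φ₂, hφ₂, hθφ⟩ := isCompact_simplex.tendsto_subseq hθsimp
  let e : ℕ → ℕ := φ₁ ∘ φ₂
  have heSM : StrictMono e := hφ₁.comp hφ₂
  have hek : ∀ k, k ≤ e k := fun k => heSM.le_apply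
  have hA : Tendsto (fun k => x (e k)) atTop (nhds xb) := hxφ₁.comp hφ₂.tendsto_atTop
  have hB : Tendsto (fun k => θ (e k)) atTop (nhds θb) := hθφ
  have hm : Tendsto (fun k => N (e k)) atTop atTop :=
    tendsto_atTop_mono (fun k => (hek k).trans (hNge (e k))) tendsto_id
  have hθm : Tendsto (fun k => θN (N (e k))) atTop (nhds θc) := hθconv.comp hm
  have hrm : Tendsto (fun k => rN (N (e k))) atTop (nhds rc) := hrconv.comp hm
  have hL0 : Tendsto (fun k => lam (e k)) atTop (nhds 0) := by
    have hle : ∀ k : ℕ, lam (e k) ≤ 1/((k:ℝ)+1) := by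
      intro k
      refine (hlamle (e k)).trans ?_
      apply one_div_le_one_div_of_le (by positivity)
      have : (k:ℝ) ≤ (e k : ℝ) := by exact_mod_cast hek k
      linarith
    exact squeeze_zero (fun k => (hlam0 (e k)).le) hle
      tendsto_one_div_add_atTop_nhds_zero_nat
  -- componentwise limits of h and G along the sequence
  have hhA : ∀ j, Tendsto (fun k => h j (x (e k))) atTop (nhds (h j xb)) := by
    intro j
    obtain ⟨Lh, hLh⟩ := hhLip j
    rw [tendsto_iff_dist_tendsto_zero]
    have hnorm : Tendsto (fun k => ‖x (e k) - xb‖) atTop (nhds 0) := by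
      simpa using (hA.sub_const xb).norm
    apply squeeze_zero (fun k => dist_nonneg) (g := fun k => Lh * ‖x (e k) - xb‖)
      (fun k => ?_) (by simpa using tendsto_const_nhds.mul hnorm)
    rw [Real.dist_eq]
    exact hLh _ (hxmem (e k)) _ hxbX
  have hGA : ∀ j, Tendsto (fun k => G j (x (e k))) atTop (nhds (G j xb)) := by
    intro j
    obtain ⟨LG, hLG⟩ := hGLip j
    rw [tendsto_iff_dist_tendsto_zero]
    have hnorm : Tendsto (fun k => ‖x (e k) - xb‖) atTop (nhds 0) := by
      simpa using (hA.sub_const xb).norm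
    apply squeeze_zero (fun k => dist_nonneg) (g := fun k => LG * ‖x (e k) - xb‖)
      (fun k => ?_) (by simpa using tendsto_const_nhds.mul hnorm)
    rw [dist_eq_norm]
    exact hLG _ (hxmem (e k)) _ hxbX
  have hGAi : ∀ j i, Tendsto (fun k => G j (x (e k)) i) atTop (nhds (G j xb i)) :=
    fun j i => tendsto_pi_nhds.1 (hGA j) i
  have hAi : ∀ i, Tendsto (fun k => x (e k) i) atTop (nhds (xb i)) := tendsto_pi_nhds.1 hA
  have hBj : ∀ j, Tendsto (fun k => θ (e k) j) atTop (nhds (θb j)) := tendsto_pi_nhds.1 hB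
  -- θb belongs to the limiting ambiguity set
  have hθbamb : θb ∈ amb θc rc := by
    refine ⟨?_, hθbsimp⟩
    have hk : ∀ k, ‖θ (e k) - θN (N (e k))‖ ≤ rN (N (e k)) := fun k => ((hθarg (e k)).1).1
    exact le_of_tendsto_of_tendsto' (hB.sub hθm).norm hrm hk
  -- generic limit of the objective along the sequence
  have hobj : ∀ (T : ℕ → Fin n → ℝ) (t : Fin n → ℝ), Tendsto T atTop (nhds t) →
      Tendsto (fun k => obj h (lam (e k)) (x (e k)) (T k)) atTop (nhds (obj h 0 xb t)) := by
    intro T t hT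
    have hTj := tendsto_pi_nhds.1 hT
    have h1 : Tendsto (fun k => ∑ j, T k j * h j (x (e k))) atTop
        (nhds (∑ j, t j * h j xb)) :=
      tendsto_finset_sum _ fun j _ => (hTj j).mul (hhA j)
    have h2 : Tendsto (fun k => lam (e k) * ∑ j, (T k j)^2) atTop
        (nhds (0 * ∑ j, (t j)^2)) :=
      hL0.mul (tendsto_finset_sum _ fun j _ => (hTj j).pow 2)
    have := h1.sub h2
    simpa [obj] using this
  -- θb maximizes obj h 0 xb over amb θc rc
  have hmax : ∀ t ∈ amb θc rc, obj h 0 xb t ≤ obj h 0 xb θb := by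
    intro t ht
    obtain ⟨T, hTamb, hTt⟩ : ∃ T : ℕ → Fin n → ℝ,
        (∀ k, T k ∈ amb (θN (N (e k))) (rN (N (e k)))) ∧ Tendsto T atTop (nhds t) := by
      by_cases hrc0 : rc = 0
      · have ht0 : t = θc := by
          have h1 := ht.1
          rw [hrc0] at h1
          exact sub_eq_zero.1 (norm_le_zero_iff.1 h1)
        exact ⟨fun k => θN (N (e k)),
          fun k => ⟨by simpa using (hrN (N (e k))).1, hθN (N (e k))⟩, ht0 ▸ hθm⟩
      · have hrcpos : 0 < rc := lt_of_le_of_ne hrc.1 (Ne.symm hrc0)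
        have hδnn : ∀ k, (0:ℝ) ≤ ‖θN (N (e k)) - θc‖ := fun k => norm_nonneg _
        have hδ0 : Tendsto (fun k => ‖θN (N (e k)) - θc‖) atTop (nhds 0) := by
          simpa using (hθm.sub_const θc).norm
        have hdenpos : ∀ k, 0 < rc + ‖θN (N (e k)) - θc‖ :=
          fun k => add_pos_of_pos_of_nonneg hrcpos (hδnn k)
        set s : ℕ → ℝ := fun k => min 1 (rN (N (e k)) / (rc + ‖θN (N (e k)) - θc‖))
          with hsdef
        have hs0 : ∀ k, 0 ≤ s k :=
          fun k => le_min zero_le_one (div_nonneg (hrN _).1 (hdenpos k).le)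
        have hs1 : ∀ k, s k ≤ 1 := fun k => min_le_left _ _
        have hstend : Tendsto s atTop (nhds 1) := by
          have h1 : Tendsto (fun k => rN (N (e k)) / (rc + ‖θN (N (e k)) - θc‖)) atTop
              (nhds (rc / (rc + 0))) :=
            hrm.div (tendsto_const_nhds.add hδ0) (by simpa using hrcpos.ne')
          have h2 := (tendsto_const_nhds (x := (1:ℝ)) (f := atTop (α := ℕ))).min h1
          simpa [hsdef, div_self hrcpos.ne'] using h2
        refine ⟨fun k => fun j => (1 - s k) * θN (N (e k)) j + s k * t j,
          fun k => ⟨?_, ?_, fun j => ?_⟩, ?_⟩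
        · show ‖(fun j => (1 - s k) * θN (N (e k)) j + s k * t j) - θN (N (e k))‖
              ≤ rN (N (e k))
          have heq : (fun j => (1 - s k) * θN (N (e k)) j + s k * t j) - θN (N (e k))
              = s k • (t - θN (N (e k))) := by
            funext j
            simp only [Pi.sub_apply, Pi.smul_apply, smul_eq_mul]
            ring
          rw [heq, norm_smul, Real.norm_eq_abs, abs_of_nonneg (hs0 k)]
          have hb : ‖t - θN (N (e k))‖ ≤ rc + ‖θN (N (e k)) - θc‖ := by
            have hsplit : t - θN (N (e k)) = (t - θc) + (θc - θN (N (e k))) := by abel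
            calc ‖t - θN (N (e k))‖ ≤ ‖t - θc‖ + ‖θc - θN (N (e k))‖ := by
                  rw [hsplit]; exact norm_add_le _ _
              _ ≤ rc + ‖θN (N (e k)) - θc‖ := by
                  rw [norm_sub_rev (θc)]
                  exact add_le_add (show ‖t - θc‖ ≤ rc from ht.1) le_rfl
          calc s k * ‖t - θN (N (e k))‖
              ≤ (rN (N (e k)) / (rc + ‖θN (N (e k)) - θc‖)) * (rc + ‖θN (N (e k)) - θc‖) :=
                mul_le_mul (min_le_right _ _) hb (norm_nonneg _)
                  (div_nonneg (hrN _).1 (hdenpos k).le)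
            _ = rN (N (e k)) := div_mul_cancel₀ _ (hdenpos k).ne'
        · rw [Finset.sum_add_distrib, ← Finset.mul_sum, ← Finset.mul_sum,
            (hθN (N (e k))).1, ht.2.1]
          ring
        · exact add_nonneg (mul_nonneg (by linarith [hs1 k]) ((hθN (N (e k))).2 j))
            (mul_nonneg (hs0 k) (ht.2.2 j))
        · refine tendsto_pi_nhds.2 fun j => ?_
          have := (((tendsto_const_nhds (x := (1:ℝ)) (f := atTop (α := ℕ))).sub
              hstend).mul (tendsto_pi_nhds.1 hθm j)).add
            (hstend.mul (tendsto_const_nhds (x := t j) (f := atTop (α := ℕ))))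
          simpa using this
    have hineq : ∀ k, obj h (lam (e k)) (x (e k)) (T k)
        ≤ obj h (lam (e k)) (x (e k)) (θ (e k)) := by
      intro k
      have h1 := le_nuval h (lam (e k)) (x (e k)) (θN (N (e k))) (rN (N (e k))) (hTamb k)
      rw [← (hθarg (e k)).2] at h1
      exact h1
    exact le_of_tendsto_of_tendsto' (hobj T t hTt) (hobj (fun k => θ (e k)) θb hB) hineq
  -- θb is in the limiting argmax set
  have hambne : θc ∈ amb θc rc := ⟨by simpa using hrc.1, hθc⟩
  have hargb : θb ∈ argmaxSet h 0 xb θc rc := by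
    refine ⟨hθbamb, le_antisymm (le_nuval h 0 xb θc rc hθbamb) ?_⟩
    apply csSup_le ⟨_, Set.mem_image_of_mem _ hambne⟩
    rintro a ⟨t, ht, rfl⟩
    exact hmax t ht
  -- the limiting VI holds at xb
  have hVIb : ∀ y ∈ X, 0 ≤ ∑ i, (∑ j, θb j * G j xb i) * (y i - xb i) := by
    intro y hy
    have hk : ∀ k, 0 ≤ ∑ i, (∑ j, θ (e k) j * G j (x (e k)) i) * (y i - x (e k) i) :=
      fun k => hVI (e k) y hy
    have hlim : Tendsto
        (fun k => ∑ i, (∑ j, θ (e k) j * G j (x (e k)) i) * (y i - x (e k) i)) atTop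
        (nhds (∑ i, (∑ j, θb j * G j xb i) * (y i - xb i))) :=
      tendsto_finset_sum _ fun i _ =>
        (tendsto_finset_sum _ fun j _ => (hBj j).mul (hGAi j i)).mul
          (tendsto_const_nhds.sub (hAi i))
    exact ge_of_tendsto' hlim hk
  have hxbsol : xb ∈ solSet G h 0 X θc rc := ⟨hxbX, θb, hargb, hVIb⟩
  -- contradiction with ε < infDist
  have hfin : ∀ k, ε ≤ dist (x (e k)) xb := by
    intro k
    exact le_trans (hxdist (e k)).le (Metric.infDist_le_dist_of_mem hxbsol)
  have hdist0 : Tendsto (fun k => dist (x (e k)) xb) atTop (nhds 0) :=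
    tendsto_iff_dist_tendsto_zero.1 hA
  have : ε ≤ 0 := ge_of_tendsto' hdist0 hfin
  linarith
end
end
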